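/- Let π = 3 + √-2 ∈ ℤ[√-2] and n ≥ 1. If a, b, c, d ∈ ℤ[√-2] satisfy (aπⁿ + 1)(dπⁿ + 1) - bc·π^{2n} = 1, then πⁿ divides a + d in ℤ[√-2]; consequently, if a + d ≠ 0 then |(a + d)πⁿ + 2| ≥ 11ⁿ - 2. -/

import Mathlib

open Real Complex

/-- The embedding of `ℤ[√-2]` into `ℂ` via `√-2 ↦ i√2`. -/
noncomputable def toC (z : ℤ√(-2)) : ℂ :=
  (z.re : ℂ) + (z.im : ℂ) * (Complex.I * Real.sqrt 2)

lemma abs_toC (z : ℤ√(-2)) : ‖toC z‖ = Real.sqrt (z.norm) := by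
  have h : toC z = ((z.re : ℝ) : ℂ) + (((z.im : ℝ) * Real.sqrt 2 : ℝ) : ℂ) * Complex.I := by
    unfold toC; push_cast; ring
  rw [h, Complex.norm_add_mul_I]
  congr 1
  have h2 : Real.sqrt 2 * Real.sqrt 2 = 2 := Real.mul_self_sqrt (by norm_num)
  simp [Zsqrtd.norm_def]
  push_cast
  ring_nf
  nlinarith [h2]

lemma toC_add (z w : ℤ√(-2)) : toC (z + w) = toC z + toC w := by
  unfold toC; simp only [Zsqrtd.re_add, Zsqrtd.im_add]; push_cast; ring

lemma norm_pow' (z : ℤ√(-2)) (n : ℕ) : (z ^ n).norm = z.norm ^ n :=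
  map_pow (Zsqrtd.normMonoidHom) z n

lemma cancel' (x y z : ℤ√(-2)) (hz : z ≠ 0) (h : x * z = y * z) : x = y := by
  have h0 : (x - y) * z = 0 := by linear_combination h
  have h1 : (x - y).norm * z.norm = 0 := by
    rw [← Zsqrtd.norm_mul, h0, Zsqrtd.norm_zero]
  have hz' : z.norm ≠ 0 := fun hc => hz ((Zsqrtd.norm_eq_zero_iff (by norm_num) z).mp hc)
  have : (x - y).norm = 0 := by
    rcases mul_eq_zero.mp h1 with h' | h'
    · exact h'
    · exact absurd h' hz'
  have := (Zsqrtd.norm_eq_zero_iff (by norm_num) _).mp this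
  linear_combination this

theorem stmt18 (n : ℕ) (hn : 1 ≤ n) (a b c d : ℤ√(-2))
    (p : ℤ√(-2)) (hp : p = ⟨3, 1⟩)
    (h : (a * p ^ n + 1) * (d * p ^ n + 1) - b * c * p ^ (2 * n) = 1) :
    p ^ n ∣ (a + d) ∧
    (a + d ≠ 0 →
      (11 : ℝ) ^ n - 2 ≤ ‖toC ((a + d) * p ^ n + 2)‖) := by
  have hp0 : p ≠ 0 := by rw [hp]; intro hc; exact absurd (congrArg Zsqrtd.re hc) (by simp)
  have hpn0 : p ^ n ≠ 0 := by
    intro hc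
    have := congrArg Zsqrtd.norm hc
    rw [norm_pow', Zsqrtd.norm_zero, hp] at this
    simp [Zsqrtd.norm_def] at this
  have key : (a + d) = (b * c - a * d) * p ^ n := by
    have h2 : (a + d) * p ^ n = ((b * c - a * d) * p ^ n) * p ^ n := by
      have : p ^ (2 * n) = p ^ n * p ^ n := by rw [two_mul, pow_add]
      rw [this] at h
      linear_combination h
    exact cancel' _ _ _ hpn0 h2
  constructor
  · exact ⟨b * c - a * d, by rw [key, mul_comm]⟩
  · intro had
    set k := b * c - a * d with hk
    have hk0 : k ≠ 0 := by
      intro hc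
      apply had
      rw [key, hc, zero_mul]
    have heq : (a + d) * p ^ n + 2 = k * (p ^ n * p ^ n) + 2 := by
      rw [key]; ring
    rw [heq, toC_add]
    have h1 : ‖toC ((2 : ℤ√(-2)))‖ = 2 := by
      rw [abs_toC]
      have : ((2:ℤ√(-2)).norm : ℝ) = 4 := by norm_num [Zsqrtd.norm_def]
      rw [this]
      rw [show (4:ℝ) = 2^2 by norm_num, Real.sqrt_sq (by norm_num)]
    have hnormp : (p : ℤ√(-2)).norm = 11 := by rw [hp]; simp [Zsqrtd.norm_def]
    have hnk : 1 ≤ k.norm := by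
      rcases lt_or_eq_of_le (Zsqrtd.norm_nonneg (by norm_num) k) with h' | h'
      · omega
      · exact absurd ((Zsqrtd.norm_eq_zero_iff (by norm_num) k).mp h'.symm) hk0
    have h2 : (11 : ℝ) ^ n ≤ ‖toC (k * (p ^ n * p ^ n))‖ := by
      rw [abs_toC]
      have : (k * (p ^ n * p ^ n)).norm = k.norm * (11 ^ n * 11 ^ n) := by
        rw [Zsqrtd.norm_mul, Zsqrtd.norm_mul, norm_pow', hnormp]
      rw [this]
      have h11 : ((11 : ℝ)) ^ n = Real.sqrt ((11 ^ n * 11 ^ n : ℤ)) := by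
        push_cast
        rw [Real.sqrt_mul_self (by positivity)]
      rw [h11]
      apply Real.sqrt_le_sqrt
      have h' : (11:ℤ) ^ n * 11 ^ n ≤ k.norm * (11 ^ n * 11 ^ n) := by
        nlinarith [hnk, pow_pos (show (0:ℤ) < 11 by norm_num) n]
      exact_mod_cast h'
    calc (11 : ℝ) ^ n - 2
        ≤ ‖toC (k * (p ^ n * p ^ n))‖ - ‖toC (2 : ℤ√(-2))‖ := by
          rw [h1]; linarith
      _ ≤ ‖toC (k * (p ^ n * p ^ n)) + toC (2 : ℤ√(-2))‖ := by
          have := norm_add_le (toC (k * (p ^ n * p ^ n)) + toC (2 : ℤ√(-2))) (-toC (2 : ℤ√(-2)))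
          simp only [add_neg_cancel_right] at this
          have hn2 : ‖-toC (2:ℤ√(-2))‖ = 2 := by rw [norm_neg]; exact h1
          rw [hn2] at this
          linarith [this]
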